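/- arXiv:1506.05769 — 3 statements merged into one kernel-verified Lean document; each statement's English description precedes it below -/
import Mathlib

section
/- Let G be a graph, e = xy an edge of G. Let L be the ideal generated by the variables in (N(x) ∪ N(y)) \ {x,y}, and H the induced subgraph of G on V(G) \ (N(x) ∪ N(y)). Then the colon ideal satisfies I(G \ e) : (xy) = L + I(H), where G \ e is the graph G with the edge e removed. -/
open MvPolynomial

/-- The edge ideal of a graph `G`: the ideal of `k[x_v : v ∈ V]` generated by the products
`x_u x_v` over the edges `{u, v}` of `G`. -/
noncomputable def edgeIdeal (k : Type*) [Field k] {V : Type*} (G : SimpleGraph V) :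
    Ideal (MvPolynomial V k) :=
  Ideal.span {p | ∃ u v : V, G.Adj u v ∧ p = X u * X v}

lemma X_mul_X_eq_monomial {k V : Type*} [CommSemiring k] (u v : V) :
    (X u * X v : MvPolynomial V k) = monomial (Finsupp.single u 1 + Finsupp.single v 1) 1 := by
  rw [← pow_one (X u : MvPolynomial V k), ← pow_one (X v : MvPolynomial V k),
    X_pow_eq_monomial, X_pow_eq_monomial, monomial_mul, one_mul]

lemma edgeIdeal_eq_span_monomial (k : Type*) [Field k] {V : Type*} (G : SimpleGraph V) :
    edgeIdeal k G = Ideal.span ((fun d => monomial d (1 : k)) ''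
      {d : V →₀ ℕ | ∃ u v : V, G.Adj u v ∧ d = Finsupp.single u 1 + Finsupp.single v 1}) := by
  unfold edgeIdeal
  congr 1
  ext p
  constructor
  · rintro ⟨u, v, h, rfl⟩
    exact ⟨_, ⟨u, v, h, rfl⟩, (X_mul_X_eq_monomial u v).symm⟩
  · rintro ⟨d, ⟨u, v, h, rfl⟩, rfl⟩
    exact ⟨u, v, h, (X_mul_X_eq_monomial u v).symm⟩

/-- For an edge `e = xy` of `G`, with `L` the ideal generated by the variables in
`(N(x) ∪ N(y)) \ {x, y}` and `H` the induced subgraph of `G` on `V(G) \ (N(x) ∪ N(y))`,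
one has `I(G \ e) : (xy) = L + I(H)`. -/
theorem colon_edgeIdeal_deleteEdge {k : Type*} [Field k] {V : Type*}
    (G : SimpleGraph V) (x y : V) (hxy : G.Adj x y)
    (H : SimpleGraph V)
    (hH : ∀ u v : V, H.Adj u v ↔ (G.Adj u v ∧
      u ∉ G.neighborSet x ∪ G.neighborSet y ∧ v ∉ G.neighborSet x ∪ G.neighborSet y)) :
    (edgeIdeal k (G.deleteEdges {s(x, y)})).colon
        (Ideal.span {(X x * X y : MvPolynomial V k)}) =
      Ideal.span (MvPolynomial.X '' ((G.neighborSet x ∪ G.neighborSet y) \ {x, y}))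
        + edgeIdeal k H := by
  classical
  set D : Set V := (G.neighborSet x ∪ G.neighborSet y) \ {x, y} with hD
  set S : Set (V →₀ ℕ) := (fun z => Finsupp.single z 1) '' D ∪
    {d : V →₀ ℕ | ∃ u v : V, H.Adj u v ∧ d = Finsupp.single u 1 + Finsupp.single v 1} with hS
  have hRHS : Ideal.span (MvPolynomial.X '' D) + edgeIdeal k H =
      Ideal.span ((fun d => monomial d (1 : k)) '' S) := by
    rw [hS, Set.image_union, Ideal.span_union, edgeIdeal_eq_span_monomial,
      Set.image_image, Submodule.add_eq_sup]
    rfl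
  rw [hRHS]
  ext f
  rw [Ideal.mem_colon_span_singleton, edgeIdeal_eq_span_monomial,
    mem_ideal_span_monomial_image, mem_ideal_span_monomial_image]
  have hsupp : (f * (X x * X y) : MvPolynomial V k).support =
      (f.support.map (addRightEmbedding (Finsupp.single x 1))).map
        (addRightEmbedding (Finsupp.single y 1)) := by
    rw [← mul_assoc, support_mul_X, support_mul_X]
  have hmem : ∀ m : V →₀ ℕ, m ∈ (f * (X x * X y) : MvPolynomial V k).support ↔
      ∃ m' ∈ f.support, m = m' + Finsupp.single x 1 + Finsupp.single y 1 := by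
    intro m
    rw [hsupp]
    simp only [Finset.mem_map, addRightEmbedding_apply]
    constructor
    · rintro ⟨a, ⟨m', hm', rfl⟩, rfl⟩; exact ⟨m', hm', rfl⟩
    · rintro ⟨m', hm', rfl⟩; exact ⟨m' + Finsupp.single x 1, ⟨m', hm', rfl⟩, rfl⟩
  have hxny : y ∈ G.neighborSet x := hxy
  have hynx : x ∈ G.neighborSet y := hxy.symm
  constructor
  · -- hard direction
    intro h m hm
    obtain ⟨d, ⟨u, v, huv, rfl⟩, hle⟩ :=
      h (m + Finsupp.single x 1 + Finsupp.single y 1) ((hmem _).2 ⟨m, hm, rfl⟩)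
    rw [SimpleGraph.deleteEdges_adj, Set.mem_singleton_iff] at huv
    obtain ⟨hadj, hne⟩ := huv
    have huvne : u ≠ v := hadj.ne
    have key : ∀ w : V, w ≠ x → w ≠ y → (w = u ∨ w = v) → 1 ≤ m w := by
      intro w hwx hwy hw
      have := hle w
      simp only [Finsupp.add_apply, Finsupp.single_apply] at this
      rw [if_neg (fun h : x = w => hwx h.symm), if_neg (fun h : y = w => hwy h.symm)] at this
      rcases hw with h | h
      · rw [if_pos h.symm, if_neg (fun h2 : v = w => huvne (h2.trans h).symm)] at this
        omega
      · rw [if_neg (fun h2 : u = w => huvne (h2.trans h)), if_pos h.symm] at this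
        omega
    have singleCase : ∀ w : V, w ∈ G.neighborSet x ∪ G.neighborSet y → w ≠ x → w ≠ y →
        (w = u ∨ w = v) → ∃ d ∈ S, d ≤ m := by
      intro w hwN hwx hwy hw
      refine ⟨Finsupp.single w 1, Or.inl ⟨w, ⟨hwN, ?_⟩, rfl⟩, Finsupp.single_le_iff.2 (key w hwx hwy hw)⟩
      simp [hwx, hwy]
    by_cases hux : u = x
    · subst hux
      have hvy : v ≠ y := fun h => hne (by rw [h])
      exact singleCase v (Or.inl hadj) (fun h => huvne h.symm) hvy (Or.inr rfl)
    by_cases huy : u = y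
    · subst huy
      have hvx : v ≠ x := fun h => hne (by rw [h, Sym2.eq_swap])
      exact singleCase v (Or.inr hadj) hvx (fun h => huvne h.symm) (Or.inr rfl)
    by_cases hvx : v = x
    · subst hvx
      exact singleCase u (Or.inl hadj.symm) hux huy (Or.inl rfl)
    by_cases hvy : v = y
    · subst hvy
      exact singleCase u (Or.inr hadj.symm) hux huy (Or.inl rfl)
    -- now u, v ∉ {x, y}
    by_cases huN : u ∈ G.neighborSet x ∪ G.neighborSet y
    · exact singleCase u huN hux huy (Or.inl rfl)
    by_cases hvN : v ∈ G.neighborSet x ∪ G.neighborSet y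
    · exact singleCase v hvN hvx hvy (Or.inr rfl)
    · refine ⟨Finsupp.single u 1 + Finsupp.single v 1,
        Or.inr ⟨u, v, (hH u v).2 ⟨hadj, huN, hvN⟩, rfl⟩, ?_⟩
      intro w
      simp only [Finsupp.add_apply, Finsupp.single_apply]
      by_cases hwu : u = w
      · subst hwu
        rw [if_pos rfl, if_neg (fun h : v = u => huvne h.symm)]
        simpa using key u hux huy (Or.inl rfl)
      by_cases hwv : v = w
      · subst hwv
        rw [if_neg hwu, if_pos rfl]
        simpa using key v hvx hvy (Or.inr rfl)
      · simp [hwu, hwv]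
  · -- easy direction
    intro h m hm
    obtain ⟨m', hm', rfl⟩ := (hmem m).1 hm
    obtain ⟨d, hdS, hdm⟩ := h m' hm'
    rcases hdS with ⟨z, ⟨hzN, hzxy⟩, rfl⟩ | ⟨u, v, huv, rfl⟩
    · have hzx : z ≠ x := fun h => hzxy (by simp [h])
      have hzy : z ≠ y := fun h => hzxy (by simp [h])
      rcases hzN with hzN | hzN
      · -- z ∈ N(x): edge {z, x} survives
        refine ⟨Finsupp.single z 1 + Finsupp.single x 1, ⟨z, x, ?_, rfl⟩, ?_⟩
        · rw [SimpleGraph.deleteEdges_adj, Set.mem_singleton_iff]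
          refine ⟨hzN.symm, fun hc => ?_⟩
          rw [Sym2.eq_iff] at hc
          rcases hc with ⟨rfl, rfl⟩ | ⟨rfl, _⟩
          · exact hzx rfl
          · exact hzy rfl
        · calc Finsupp.single z 1 + Finsupp.single x 1
              ≤ m' + Finsupp.single x 1 := add_le_add_left hdm _
            _ ≤ m' + Finsupp.single x 1 + Finsupp.single y 1 := le_add_of_nonneg_right zero_le
      · -- z ∈ N(y): edge {z, y} survives
        refine ⟨Finsupp.single z 1 + Finsupp.single y 1, ⟨z, y, ?_, rfl⟩, ?_⟩
        · rw [SimpleGraph.deleteEdges_adj, Set.mem_singleton_iff]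
          refine ⟨hzN.symm, fun hc => ?_⟩
          rw [Sym2.eq_iff] at hc
          rcases hc with ⟨rfl, _⟩ | ⟨rfl, _⟩
          · exact hzx rfl
          · exact hzy rfl
        · calc Finsupp.single z 1 + Finsupp.single y 1
              ≤ m' + Finsupp.single y 1 := add_le_add_left hdm _
            _ ≤ m' + Finsupp.single x 1 + Finsupp.single y 1 :=
              add_le_add_left (le_add_of_nonneg_right zero_le) _
    · -- H-edge
      obtain ⟨hadj, huN, hvN⟩ := (hH u v).1 huv
      refine ⟨Finsupp.single u 1 + Finsupp.single v 1, ⟨u, v, ?_, rfl⟩, ?_⟩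
      · rw [SimpleGraph.deleteEdges_adj, Set.mem_singleton_iff]
        refine ⟨hadj, fun hc => ?_⟩
        rw [Sym2.eq_iff] at hc
        rcases hc with ⟨rfl, rfl⟩ | ⟨rfl, rfl⟩
        · exact huN (Or.inr hynx)
        · exact huN (Or.inl hxny)
      · calc Finsupp.single u 1 + Finsupp.single v 1 ≤ m' := hdm
          _ ≤ m' + Finsupp.single x 1 + Finsupp.single y 1 :=
              ((le_add_of_nonneg_right zero_le).trans (le_add_of_nonneg_right zero_le))
end

section
/- Let G be a graph with inmat(G) = 1 and e = xy an edge of G. Then every edge of G \ e contains a neighbor of x or a neighbor of y; consequently I(G \ e) : (xy) = (y_1,...,y_p) where y_1,...,y_p are the elements of (N(x) ∪ N(y)) \ {x,y}. -/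
open MvPolynomial

/-- `M` is an induced matching of `G`: a set of pairwise vertex-disjoint edges of `G` such
that the only edges of `G` between vertices covered by `M` are the edges of `M` themselves. -/
def SimpleGraph.IsInducedMatching {V : Type*} (G : SimpleGraph V) (M : Finset (Sym2 V)) : Prop :=
  (↑M : Set (Sym2 V)) ⊆ G.edgeSet ∧
  (∀ e ∈ M, ∀ f ∈ M, e ≠ f → ∀ u : V, u ∈ e → u ∉ f) ∧
  (∀ u v : V, (∃ e ∈ M, u ∈ e) → (∃ f ∈ M, v ∈ f) → G.Adj u v → s(u, v) ∈ M)

/-- The induced matching number of `G`: the largest size of an induced matching. -/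
noncomputable def SimpleGraph.inducedMatchingNumber {V : Type*} (G : SimpleGraph V) : ℕ :=
  sSup {n : ℕ | ∃ M : Finset (Sym2 V), G.IsInducedMatching M ∧ M.card = n}

/-- Part 1: if `inmat(G) = 1` and `xy ∈ G`, every edge of `G \ xy` meets `N(x) ∪ N(y)`. -/
lemma part1_aux {V : Type*} (G : SimpleGraph V) (x y : V) (hxy : G.Adj x y)
    (hmat : G.inducedMatchingNumber = 1) :
    ∀ u v : V, (G.deleteEdges {s(x, y)}).Adj u v →
        u ∈ G.neighborSet x ∪ G.neighborSet y ∨ v ∈ G.neighborSet x ∪ G.neighborSet y := by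
  classical
  intro u v huv
  by_contra hcon
  push_neg at hcon
  obtain ⟨hu, hv⟩ := hcon
  simp only [Set.mem_union, SimpleGraph.mem_neighborSet] at hu hv
  push_neg at hu hv
  rw [SimpleGraph.deleteEdges_adj] at huv
  obtain ⟨hG, hne⟩ := huv
  simp only [Set.mem_singleton_iff] at hne
  -- u, v are not x, y and not adjacent to x, y
  have hux : u ≠ x := by rintro rfl; exact hv.1 hG
  have huy : u ≠ y := by rintro rfl; exact hv.2 hG
  have hvx : v ≠ x := by rintro rfl; exact hu.1 hG.symm
  have hvy : v ≠ y := by rintro rfl; exact hu.2 hG.symm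
  -- the induced matching {xy, uv} has size 2
  set M : Finset (Sym2 V) := {s(x, y), s(u, v)} with hM
  have hmem : ∀ w : V, (∃ e ∈ M, w ∈ e) → (w = x ∨ w = y) ∨ (w = u ∨ w = v) := by
    rintro w ⟨e, he, hwe⟩
    simp only [hM, Finset.mem_insert, Finset.mem_singleton] at he
    rcases he with rfl | rfl
    · exact Or.inl (Sym2.mem_iff.mp hwe)
    · exact Or.inr (Sym2.mem_iff.mp hwe)
  have hsum : s(u, v) ≠ s(x, y) := by
    intro h
    rcases Sym2.eq_iff.mp h with ⟨rfl, rfl⟩ | ⟨rfl, rfl⟩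
    · exact hux rfl
    · exact huy rfl
  have hind : G.IsInducedMatching M := by
    refine ⟨?_, ?_, ?_⟩
    · intro e he
      simp only [hM, Finset.coe_insert, Finset.coe_singleton, Set.mem_insert_iff,
        Set.mem_singleton_iff] at he
      rcases he with rfl | rfl
      · exact hxy
      · exact hG
    · intro e he f hf hef w hwe hwf
      simp only [hM, Finset.mem_insert, Finset.mem_singleton] at he hf
      rcases he with rfl | rfl <;> rcases hf with rfl | rfl
      · exact hef rfl
      · rcases Sym2.mem_iff.mp hwe with rfl | rfl <;>
          rcases Sym2.mem_iff.mp hwf with rfl | rfl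
        · exact hux rfl
        · exact hvx rfl
        · exact huy rfl
        · exact hvy rfl
      · rcases Sym2.mem_iff.mp hwe with rfl | rfl <;>
          rcases Sym2.mem_iff.mp hwf with rfl | rfl
        · exact hux rfl
        · exact huy rfl
        · exact hvx rfl
        · exact hvy rfl
      · exact hef rfl
    · intro a b ha hb hab
      rcases hmem a ha with (rfl | rfl) | (rfl | rfl) <;>
        rcases hmem b hb with (rfl | rfl) | (rfl | rfl)
      all_goals first
        | exact absurd rfl hab.ne
        | exact absurd hab hu.1
        | exact absurd hab hu.2
        | exact absurd hab hv.1
        | exact absurd hab hv.2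
        | exact absurd hab.symm hu.1
        | exact absurd hab.symm hu.2
        | exact absurd hab.symm hv.1
        | exact absurd hab.symm hv.2
        | (simp only [hM, Finset.mem_insert, Finset.mem_singleton, Sym2.eq_iff]
           tauto)
  have hcard : M.card = 2 := by
    rw [hM, Finset.card_insert_of_notMem
      (by simp only [Finset.mem_singleton]; exact hsum.symm), Finset.card_singleton]
  have h2 : (2 : ℕ) ∈ {n : ℕ | ∃ M : Finset (Sym2 V), G.IsInducedMatching M ∧ M.card = n} :=
    ⟨M, hind, hcard⟩
  unfold SimpleGraph.inducedMatchingNumber at hmat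
  by_cases hb : BddAbove {n : ℕ | ∃ M : Finset (Sym2 V), G.IsInducedMatching M ∧ M.card = n}
  · have := le_csSup hb h2
    omega
  · rw [csSup_of_not_bddAbove hb, csSup_empty] at hmat
    exact absurd hmat (by norm_num)

/-- If `inmat(G) = 1` and `e = xy` is an edge of `G`, then every edge of
`G \ e` contains a neighbor of `x` or of `y`; consequently `I(G \ e) : (xy)` is generated by
the variables in `(N(x) ∪ N(y)) \ {x, y}`. -/
theorem colon_edgeIdeal_of_inmat_one {k : Type*} [Field k] {V : Type*}
    (G : SimpleGraph V) (x y : V) (hxy : G.Adj x y)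
    (hmat : G.inducedMatchingNumber = 1) :
    (∀ u v : V, (G.deleteEdges {s(x, y)}).Adj u v →
        u ∈ G.neighborSet x ∪ G.neighborSet y ∨ v ∈ G.neighborSet x ∪ G.neighborSet y) ∧
    (edgeIdeal k (G.deleteEdges {s(x, y)})).colon
        (Ideal.span {(X x * X y : MvPolynomial V k)}) =
      Ideal.span (MvPolynomial.X '' ((G.neighborSet x ∪ G.neighborSet y) \ {x, y})) := by
  classical
  have part1 := part1_aux G x y hxy hmat
  refine ⟨part1, ?_⟩
  set G' := G.deleteEdges {s(x, y)} with hG'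
  -- rewrite the edge ideal as a monomial ideal
  have hgen : {p : MvPolynomial V k | ∃ u v : V, G'.Adj u v ∧ p = X u * X v} =
      (fun s => monomial s (1 : k)) ''
        {s : V →₀ ℕ | ∃ u v : V, G'.Adj u v ∧ s = Finsupp.single u 1 + Finsupp.single v 1} := by
    ext p
    have hXX : ∀ u v : V, (X u * X v : MvPolynomial V k) =
        monomial (Finsupp.single u 1 + Finsupp.single v 1) 1 := by
      intro u v
      have h := monomial_mul (σ := V) (R := k) (s := Finsupp.single u 1)
        (s' := Finsupp.single v 1) (a := 1) (b := 1)
      rw [one_mul] at h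
      exact h
    constructor
    · rintro ⟨u, v, huv, rfl⟩
      exact ⟨Finsupp.single u 1 + Finsupp.single v 1, ⟨u, v, huv, rfl⟩, (hXX u v).symm⟩
    · rintro ⟨s, ⟨u, v, huv, rfl⟩, rfl⟩
      exact ⟨u, v, huv, (hXX u v).symm⟩
  have hedge : edgeIdeal k G' = Ideal.span ((fun s => monomial s (1 : k)) ''
      {s : V →₀ ℕ | ∃ u v : V, G'.Adj u v ∧ s = Finsupp.single u 1 + Finsupp.single v 1}) := by
    rw [edgeIdeal, hgen]
  -- the key combinatorial claim: every edge of G' has an endpoint in T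
  have key : ∀ u v : V, G'.Adj u v → ∃ z : V,
      z ∈ (G.neighborSet x ∪ G.neighborSet y) \ {x, y} ∧ (z = u ∨ z = v) := by
    intro u v huv
    have hGadj : G.Adj u v := (SimpleGraph.deleteEdges_adj.mp huv).1
    have hne : s(u, v) ≠ s(x, y) := by
      have := (SimpleGraph.deleteEdges_adj.mp huv).2
      simpa using this
    by_cases hux : u = x
    · have hvy : v ≠ y := by rintro rfl; rw [hux] at hne; exact hne rfl
      have hvadj : G.Adj x v := hux ▸ hGadj
      refine ⟨v, ⟨Or.inl ((G.mem_neighborSet x v).mpr hvadj), ?_⟩, Or.inr rfl⟩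
      simp only [Set.mem_insert_iff, Set.mem_singleton_iff]
      push_neg
      exact ⟨hvadj.ne', hvy⟩
    · by_cases huy : u = y
      · have hvx : v ≠ x := by rintro rfl; rw [huy] at hne; exact hne Sym2.eq_swap
        have hvadj : G.Adj y v := huy ▸ hGadj
        refine ⟨v, ⟨Or.inr ((G.mem_neighborSet y v).mpr hvadj), ?_⟩, Or.inr rfl⟩
        simp only [Set.mem_insert_iff, Set.mem_singleton_iff]
        push_neg
        exact ⟨hvx, hvadj.ne'⟩
      · by_cases hvx : v = x
        · have huadj : G.Adj x u := (hvx ▸ hGadj).symm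
          refine ⟨u, ⟨Or.inl ((G.mem_neighborSet x u).mpr huadj), ?_⟩, Or.inl rfl⟩
          simp only [Set.mem_insert_iff, Set.mem_singleton_iff]
          push_neg
          exact ⟨hux, huy⟩
        · by_cases hvy : v = y
          · have huadj : G.Adj y u := (hvy ▸ hGadj).symm
            refine ⟨u, ⟨Or.inr ((G.mem_neighborSet y u).mpr huadj), ?_⟩, Or.inl rfl⟩
            simp only [Set.mem_insert_iff, Set.mem_singleton_iff]
            push_neg
            exact ⟨hux, huy⟩
          · rcases part1 u v huv with h | h
            · refine ⟨u, ⟨h, ?_⟩, Or.inl rfl⟩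
              simp only [Set.mem_insert_iff, Set.mem_singleton_iff]
              push_neg
              exact ⟨hux, huy⟩
            · refine ⟨v, ⟨h, ?_⟩, Or.inr rfl⟩
              simp only [Set.mem_insert_iff, Set.mem_singleton_iff]
              push_neg
              exact ⟨hvx, hvy⟩
  apply le_antisymm
  · -- colon ⊆ span of variables
    intro p hp
    rw [Ideal.mem_colon_span_singleton, hedge, mem_ideal_span_monomial_image] at hp
    rw [mem_ideal_span_X_image]
    intro m hm
    -- m + single x 1 + single y 1 is in the support of p * (X x * X y)
    have hmem : m + Finsupp.single x 1 + Finsupp.single y 1 ∈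
        (p * (X x * X y)).support := by
      rw [← mul_assoc, support_mul_X, support_mul_X]
      simp only [Finset.mem_map, addRightEmbedding_apply]
      exact ⟨m + Finsupp.single x 1, ⟨m, hm, rfl⟩, rfl⟩
    obtain ⟨s, ⟨u, v, huv, rfl⟩, hle⟩ := hp _ hmem
    obtain ⟨z, hz, hzuv⟩ := key u v huv
    refine ⟨z, hz, ?_⟩
    have h1 : (1 : ℕ) ≤ (Finsupp.single u 1 + Finsupp.single v 1 : V →₀ ℕ) z := by
      rcases hzuv with rfl | rfl <;> simp
    have h2 := hle z
    have hzx : z ≠ x := by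
      intro h; exact hz.2 (by simp [h])
    have hzy : z ≠ y := by
      intro h; exact hz.2 (by simp [h])
    simp only [Finsupp.add_apply, Finsupp.single_apply, if_neg (Ne.symm hzx),
      if_neg (Ne.symm hzy), add_zero] at h2
    simp only [Finsupp.add_apply, Finsupp.single_apply] at h1
    omega
  · -- span of variables ⊆ colon
    rw [Ideal.span_le]
    rintro q ⟨z, hz, rfl⟩
    rw [SetLike.mem_coe, Ideal.mem_colon_span_singleton]
    have hzx : z ≠ x := fun h => hz.2 (by simp [h])
    have hzy : z ≠ y := fun h => hz.2 (by simp [h])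
    rcases hz.1 with hzn | hzn
    · -- z ∈ N(x): use the edge zx
      have hadj : G'.Adj z x := by
        rw [hG', SimpleGraph.deleteEdges_adj]
        refine ⟨hzn.symm, ?_⟩
        simp only [Set.mem_singleton_iff, Sym2.eq_iff]
        rintro (⟨rfl, rfl⟩ | ⟨rfl, -⟩)
        · exact hzx rfl
        · exact hzy rfl
      have hmem : (X z * X x : MvPolynomial V k) ∈ edgeIdeal k G' :=
        Ideal.subset_span ⟨z, x, hadj, rfl⟩
      have : (X z * (X x * X y) : MvPolynomial V k) = (X z * X x) * X y := by ring
      rw [this]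
      exact Ideal.mul_mem_right _ _ hmem
    · -- z ∈ N(y): use the edge zy
      have hadj : G'.Adj z y := by
        rw [hG', SimpleGraph.deleteEdges_adj]
        refine ⟨hzn.symm, ?_⟩
        simp only [Set.mem_singleton_iff, Sym2.eq_iff]
        rintro (⟨rfl, -⟩ | ⟨rfl, rfl⟩)
        · exact hzx rfl
        · exact hzy rfl
      have hmem : (X z * X y : MvPolynomial V k) ∈ edgeIdeal k G' :=
        Ideal.subset_span ⟨z, y, hadj, rfl⟩
      have : (X z * (X x * X y) : MvPolynomial V k) = (X z * X y) * X x := by ring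
      rw [this]
      exact Ideal.mul_mem_right _ _ hmem
end

section
/- In the polynomial ring R = k[x_2,...,x_{n-1}] (n ≥ 7), let J = (x_2, x_3x_4, x_4x_5, ..., x_{n-2}x_{n-1}) and L = (x_2x_3, x_3x_4, ..., x_{n-3}x_{n-2}, x_{n-1}). Then J ∩ L = (x_2x_3, x_3x_4, ..., x_{n-2}x_{n-1}, x_2x_{n-1}), which is the edge ideal of a cycle of length n−2 on the vertices x_2,...,x_{n-1}. -/
open MvPolynomial

/-- in `R = k[x₂, ..., x_{n-1}]` (`n ≥ 7`), with
`J = (x₂, x₃x₄, ..., x_{n-2}x_{n-1})` and `L = (x₂x₃, ..., x_{n-3}x_{n-2}, x_{n-1})`, one has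
`J ∩ L = (x₂x₃, x₃x₄, ..., x_{n-2}x_{n-1}, x₂x_{n-1})`, the edge ideal of the cycle of length
`n - 2` on `x₂, ..., x_{n-1}`. -/
theorem inter_J_L_eq_cycle_edgeIdeal {k : Type*} [Field k] (n : ℕ) (hn : 7 ≤ n) :
    let σ := {i : ℕ // 2 ≤ i ∧ i ≤ n - 1}
    let J : Ideal (MvPolynomial σ k) :=
      Ideal.span ({X ⟨2, by omega⟩} ∪
        {p | ∃ (i : ℕ) (h1 : 3 ≤ i) (h2 : i ≤ n - 2),
          p = X (⟨i, by omega⟩ : σ) * X (⟨i + 1, by omega⟩ : σ)})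
    let L : Ideal (MvPolynomial σ k) :=
      Ideal.span ({X ⟨n - 1, by omega⟩} ∪
        {p | ∃ (i : ℕ) (h1 : 2 ≤ i) (h2 : i ≤ n - 3),
          p = X (⟨i, by omega⟩ : σ) * X (⟨i + 1, by omega⟩ : σ)})
    let cycEdges : Set (MvPolynomial σ k) :=
      {p | ∃ (i : ℕ) (h1 : 2 ≤ i) (h2 : i ≤ n - 2),
          p = X (⟨i, by omega⟩ : σ) * X (⟨i + 1, by omega⟩ : σ)} ∪
        {X ⟨2, by omega⟩ * X ⟨n - 1, by omega⟩}
    let C : SimpleGraph σ := SimpleGraph.fromRel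
      (fun a b => a.1 + 1 = b.1 ∨ (a.1 = 2 ∧ b.1 = n - 1))
    J ⊓ L = Ideal.span cycEdges ∧ Ideal.span cycEdges = edgeIdeal k C := by
  intro σ J L cycEdges C
  have hX : ∀ a : σ, (X a : MvPolynomial σ k) = monomial (Finsupp.single a 1) 1 := fun a => rfl
  have hmon : ∀ a b : σ, (X a * X b : MvPolynomial σ k)
      = monomial (Finsupp.single a 1 + Finsupp.single b 1) 1 := by
    intro a b
    rw [hX, hX, monomial_mul, one_mul]
  have pair_le : ∀ (a b : σ) (m : σ →₀ ℕ), a ≠ b →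
      Finsupp.single a 1 ≤ m → Finsupp.single b 1 ≤ m →
      Finsupp.single a 1 + Finsupp.single b 1 ≤ m := by
    intro a b m hab ha hb
    have ha' := Finsupp.single_le_iff.mp ha
    have hb' := Finsupp.single_le_iff.mp hb
    rw [Finsupp.le_def]
    intro x
    rw [Finsupp.add_apply]
    rcases eq_or_ne x a with rfl | hxa
    · rwa [Finsupp.single_eq_same, Finsupp.single_eq_of_ne' (Ne.symm hab), add_zero]
    · rcases eq_or_ne x b with rfl | hxb
      · rwa [Finsupp.single_eq_same, Finsupp.single_eq_of_ne' hab, zero_add]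
      · rw [Finsupp.single_eq_of_ne' (Ne.symm hxa), Finsupp.single_eq_of_ne' (Ne.symm hxb)]
        exact Nat.zero_le _
  -- monomial descriptions of the three ideals
  have hJ : J = Ideal.span ((fun s => monomial s (1 : k)) ''
      ({Finsupp.single (⟨2, by omega⟩ : σ) 1} ∪
        {d | ∃ (i : ℕ) (_ : 3 ≤ i) (_ : i ≤ n - 2),
          d = Finsupp.single (⟨i, by omega⟩ : σ) 1 + Finsupp.single (⟨i + 1, by omega⟩ : σ) 1})) := by
    show Ideal.span _ = _
    congr 1
    ext p
    simp only [Set.mem_union, Set.mem_singleton_iff, Set.mem_setOf_eq, Set.mem_image]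
    constructor
    · rintro (rfl | ⟨i, h1, h2, rfl⟩)
      · exact ⟨_, Or.inl rfl, rfl⟩
      · exact ⟨_, Or.inr ⟨i, h1, h2, rfl⟩, (hmon _ _).symm⟩
    · rintro ⟨s, (rfl | ⟨i, h1, h2, rfl⟩), rfl⟩
      · exact Or.inl rfl
      · exact Or.inr ⟨i, h1, h2, (hmon _ _).symm⟩
  have hL : L = Ideal.span ((fun s => monomial s (1 : k)) ''
      ({Finsupp.single (⟨n - 1, by omega⟩ : σ) 1} ∪
        {d | ∃ (i : ℕ) (_ : 2 ≤ i) (_ : i ≤ n - 3),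
          d = Finsupp.single (⟨i, by omega⟩ : σ) 1 + Finsupp.single (⟨i + 1, by omega⟩ : σ) 1})) := by
    show Ideal.span _ = _
    congr 1
    ext p
    simp only [Set.mem_union, Set.mem_singleton_iff, Set.mem_setOf_eq, Set.mem_image]
    constructor
    · rintro (rfl | ⟨i, h1, h2, rfl⟩)
      · exact ⟨_, Or.inl rfl, rfl⟩
      · exact ⟨_, Or.inr ⟨i, h1, h2, rfl⟩, (hmon _ _).symm⟩
    · rintro ⟨s, (rfl | ⟨i, h1, h2, rfl⟩), rfl⟩
      · exact Or.inl rfl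
      · exact Or.inr ⟨i, h1, h2, (hmon _ _).symm⟩
  have hC : Ideal.span cycEdges = Ideal.span ((fun s => monomial s (1 : k)) ''
      ({d | ∃ (i : ℕ) (_ : 2 ≤ i) (_ : i ≤ n - 2),
          d = Finsupp.single (⟨i, by omega⟩ : σ) 1 + Finsupp.single (⟨i + 1, by omega⟩ : σ) 1} ∪
        {Finsupp.single (⟨2, by omega⟩ : σ) 1 + Finsupp.single (⟨n - 1, by omega⟩ : σ) 1})) := by
    congr 1
    ext p
    simp only [Set.mem_union, Set.mem_singleton_iff, Set.mem_setOf_eq, Set.mem_image]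
    constructor
    · rintro (⟨i, h1, h2, rfl⟩ | rfl)
      · exact ⟨_, Or.inl ⟨i, h1, h2, rfl⟩, (hmon _ _).symm⟩
      · exact ⟨_, Or.inr rfl, (hmon _ _).symm⟩
    · rintro ⟨s, (⟨i, h1, h2, rfl⟩ | rfl), rfl⟩
      · exact Or.inl ⟨i, h1, h2, (hmon _ _).symm⟩
      · exact Or.inr (hmon _ _).symm
  constructor
  · apply le_antisymm
    · -- J ⊓ L ≤ span cycEdges
      intro p hp
      obtain ⟨hpJ, hpL⟩ := Submodule.mem_inf.mp hp
      rw [hJ, mem_ideal_span_monomial_image] at hpJ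
      rw [hL, mem_ideal_span_monomial_image] at hpL
      rw [hC, mem_ideal_span_monomial_image]
      intro m hm
      obtain ⟨sJ, hsJ, hsJm⟩ := hpJ m hm
      obtain ⟨sL, hsL, hsLm⟩ := hpL m hm
      rcases hsJ with rfl | ⟨i, h1, h2, rfl⟩
      · rcases hsL with rfl | ⟨i, h1, h2, rfl⟩
        · refine ⟨_, Or.inr rfl, pair_le _ _ m ?_ hsJm hsLm⟩
          intro h
          have : (2 : ℕ) = n - 1 := congrArg Subtype.val h
          omega
        · exact ⟨_, Or.inl ⟨i, h1, by omega, rfl⟩, hsLm⟩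
      · exact ⟨_, Or.inl ⟨i, by omega, h2, rfl⟩, hsJm⟩
    · -- span cycEdges ≤ J ⊓ L
      rw [le_inf_iff]
      constructor
      · rw [Ideal.span_le]
        rintro p (⟨i, h1, h2, rfl⟩ | rfl)
        · by_cases h3 : 3 ≤ i
          · exact Ideal.subset_span (Or.inr ⟨i, h3, h2, rfl⟩)
          · have hi : i = 2 := by omega
            subst hi
            exact Ideal.mul_mem_right _ _ (Ideal.subset_span (Or.inl rfl))
        · exact Ideal.mul_mem_right _ _ (Ideal.subset_span (Or.inl rfl))
      · rw [Ideal.span_le]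
        rintro p (⟨i, h1, h2, rfl⟩ | rfl)
        · by_cases h3 : i ≤ n - 3
          · exact Ideal.subset_span (Or.inr ⟨i, h1, h3, rfl⟩)
          · have hi : i = n - 2 := by omega
            subst hi
            have he : (⟨n - 2 + 1, by omega⟩ : σ) = ⟨n - 1, by omega⟩ := Subtype.ext (show n - 2 + 1 = n - 1 by omega)
            rw [he]
            exact Ideal.mul_mem_left _ _ (Ideal.subset_span (Or.inl rfl))
        · exact Ideal.mul_mem_left _ _ (Ideal.subset_span (Or.inl rfl))
  · -- span cycEdges = edgeIdeal k C
    have hset : cycEdges = {p | ∃ u v : σ, C.Adj u v ∧ p = X u * X v} := by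
      ext p
      constructor
      · rintro (⟨i, h1, h2, rfl⟩ | rfl)
        · refine ⟨⟨i, by omega⟩, ⟨i + 1, by omega⟩,
            (SimpleGraph.fromRel_adj _ _ _).mpr ⟨?_, Or.inl (Or.inl rfl)⟩, rfl⟩
          intro h
          have : i = i + 1 := congrArg Subtype.val h
          omega
        · refine ⟨⟨2, by omega⟩, ⟨n - 1, by omega⟩,
            (SimpleGraph.fromRel_adj _ _ _).mpr ⟨?_, Or.inl (Or.inr ⟨rfl, rfl⟩)⟩, rfl⟩
          intro h
          have : (2 : ℕ) = n - 1 := congrArg Subtype.val h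
          omega
      · rintro ⟨⟨a, ha⟩, ⟨b, hb⟩, hadj, rfl⟩
        have hrel := ((SimpleGraph.fromRel_adj _ _ _).mp hadj).2
        simp only at hrel
        rcases hrel with (h | ⟨h2, h9⟩) | (h | ⟨h2, h9⟩)
        · subst h
          exact Or.inl ⟨a, ha.1, by omega, rfl⟩
        · subst h2; subst h9
          exact Or.inr rfl
        · subst h
          exact Or.inl ⟨b, hb.1, by omega, mul_comm _ _⟩
        · subst h2; subst h9
          exact Or.inr (mul_comm _ _)
    rw [hset]
    rfl
end
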